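/- If f is μ-strongly convex relative to the mirror map Φ (i.e. D_f(x,y) ≥ μ D_Φ(x,y) for all x,y), then along continuous-time mirror descent dz_t/dt = -∇f(x_t), x_t = ∇Φ*(z_t), the Bregman divergence to the optimum decays exponentially: D_Φ(x*, x_t) ≤ e^{-μt} D_Φ(x*, x_0). -/

import Mathlib

open MeasureTheory

/-- Bregman divergence of a function `h` with gradient field `g`. -/
noncomputable def breg {d : ℕ} (h : EuclideanSpace ℝ (Fin d) → ℝ)
    (g : EuclideanSpace ℝ (Fin d) → EuclideanSpace ℝ (Fin d))
    (a b : EuclideanSpace ℝ (Fin d)) : ℝ :=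
  h a - h b - (inner ℝ (g b) (a - b) : ℝ)

/-- For an objective `f` that is μ-strongly convex relative to the mirror map Φ,
continuous-time mirror descent satisfies `D_Φ(x*, x_T) ≤ e^{-μT} D_Φ(x*, x_0)`. -/
theorem ismd_md_strongly_convex_convergence
    (d : ℕ)
    (f Φ Φstar : EuclideanSpace ℝ (Fin d) → ℝ)
    (f' gΦ gΦstar : EuclideanSpace ℝ (Fin d) → EuclideanSpace ℝ (Fin d))
    (X : Set (EuclideanSpace ℝ (Fin d)))
    (z x : ℝ → EuclideanSpace ℝ (Fin d))
    (zstar xstar : EuclideanSpace ℝ (Fin d))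
    (μ T : ℝ) (hμ : 0 < μ) (hT : 0 ≤ T)
    -- gradients
    (hf_grad : ∀ w, HasGradientAt f (f' w) w)
    (hΦ_grad : ∀ w, HasGradientAt Φ (gΦ w) w)
    (hΦstar_grad : ∀ w, HasGradientAt Φstar (gΦstar w) w)
    (hrange : ∀ w, gΦstar w ∈ X)
    -- f is μ-strongly convex relative to Φ: D_f(a,b) ≥ μ D_Φ(a,b)
    (hrel : ∀ a b, μ * breg Φ gΦ a b ≤ breg f f' a b)
    -- mirror descent dynamics: dz_t/dt = -∇f(x_t), x_t = ∇Φ*(z_t)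
    (hdyn : ∀ t, HasDerivAt z (-(f' (x t))) t)
    (hx : ∀ t, x t = gΦstar (z t))
    -- x* minimizes f over X, z* is its mirror point
    (hmin : xstar ∈ X ∧ ∀ w ∈ X, f xstar ≤ f w)
    (hstar : gΦstar zstar = xstar)
    -- the mirror identity D_{Φ*}(z, z*) = D_Φ(x*, ∇Φ*(z))
    (hid : ∀ w, breg Φstar gΦstar w zstar = breg Φ gΦ xstar (gΦstar w)) :
    breg Φ gΦ xstar (x T) ≤ Real.exp (-μ * T) * breg Φ gΦ xstar (x 0) := by
  set V : ℝ → ℝ := fun s => breg Φstar gΦstar (z s) zstar with hVdef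
  -- derivative of V
  have hVderiv : ∀ t, HasDerivAt V
      ((inner ℝ (gΦstar (z t)) (-(f' (x t))) : ℝ) - (inner ℝ (gΦstar zstar) (-(f' (x t))) : ℝ)) t := by
    intro t
    have h1 : HasDerivAt (fun s => Φstar (z s)) ((inner ℝ (gΦstar (z t)) (-(f' (x t))) : ℝ)) t := by
      have := (hΦstar_grad (z t)).hasFDerivAt.comp_hasDerivAt t (hdyn t)
      simpa [InnerProductSpace.toDual_apply_apply, Function.comp_def] using this
    have h2 : HasDerivAt (fun s => (inner ℝ (gΦstar zstar) (z s - zstar) : ℝ))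
        ((inner ℝ (gΦstar zstar) (-(f' (x t))) : ℝ)) t := by
      have := ((innerSL ℝ (gΦstar zstar)).hasFDerivAt.comp_hasDerivAt t
        ((hdyn t).sub_const zstar))
      simpa [Function.comp_def] using this
    simpa [hVdef, breg, Pi.sub_def] using (h1.sub_const (Φstar zstar)).sub h2
  -- the key differential inequality: V' t ≤ -μ V t
  have hkey : ∀ t, (inner ℝ (gΦstar (z t)) (-(f' (x t))) : ℝ)
      - (inner ℝ (gΦstar zstar) (-(f' (x t))) : ℝ) ≤ -μ * V t := by
    intro t
    have hVeq : V t = breg Φ gΦ xstar (x t) := by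
      show breg Φstar gΦstar (z t) zstar = _; rw [hid (z t), ← hx t]
    have h1 := hrel xstar (x t)
    have h2 : f xstar ≤ f (x t) := by
      rw [hx t]; exact hmin.2 _ (hrange (z t))
    have h3 : (inner ℝ (gΦstar (z t)) (-(f' (x t))) : ℝ)
        - (inner ℝ (gΦstar zstar) (-(f' (x t))) : ℝ)
        = (inner ℝ (f' (x t)) (xstar - x t) : ℝ) := by
      rw [hstar, ← hx t]
      simp only [inner_neg_right, inner_sub_right, real_inner_comm (f' (x t))]
      ring
    rw [h3, hVeq]
    have : μ * breg Φ gΦ xstar (x t) ≤ f xstar - f (x t)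
        - (inner ℝ (f' (x t)) (xstar - x t) : ℝ) := by simpa [breg] using h1
    nlinarith
  -- Lyapunov function g(t) = exp(μ t) * V t is antitone
  have hanti : Antitone (fun t => Real.exp (μ * t) * V t) := by
    apply antitone_of_deriv_nonpos
    · intro t
      exact ((Real.hasDerivAt_exp (μ * t)).comp t
        ((hasDerivAt_id t).const_mul μ)).mul (hVderiv t) |>.differentiableAt
    · intro t
      have hd : HasDerivAt (fun t => Real.exp (μ * t) * V t)
          (Real.exp (μ * t) * μ * V t + Real.exp (μ * t) *
            ((inner ℝ (gΦstar (z t)) (-(f' (x t))) : ℝ)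
              - (inner ℝ (gΦstar zstar) (-(f' (x t))) : ℝ))) t := by
        have he : HasDerivAt (fun t => Real.exp (μ * t)) (Real.exp (μ * t) * μ) t := by
          simpa [Function.comp_def] using ((Real.hasDerivAt_exp (μ * t)).comp t
            ((hasDerivAt_id t).const_mul μ))
        simpa [mul_comm, mul_assoc, mul_left_comm, Pi.mul_def] using he.mul (hVderiv t)
      rw [hd.deriv]
      have hk := hkey t
      have hepos : (0:ℝ) < Real.exp (μ * t) := Real.exp_pos _
      nlinarith [mul_le_mul_of_nonneg_left hk hepos.le]
  have hmono := hanti hT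
  simp only at hmono
  have hVeq : ∀ t, V t = breg Φ gΦ xstar (x t) := by
    intro t; show breg Φstar gΦstar (z t) zstar = _; rw [hid (z t), ← hx t]
  rw [hVeq, hVeq, mul_zero, Real.exp_zero, one_mul] at hmono
  have hepos : (0:ℝ) < Real.exp (μ * T) := Real.exp_pos _
  rw [neg_mul, Real.exp_neg, inv_mul_eq_div, le_div_iff₀ hepos]
  linarith [hmono]
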